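/- Let K be a propositional base. If λ is a minimal LP_m model of ⋀K, then ∼_λ is a Maximal Consistency Relation of K, where ∼_λ is the equivalence relation on Occ(K) whose equivalence classes are {Occ(p,K) : p∈var(K), |λ(p)|=1} ∪ {PosOcc(p,K), NegOcc(p,K) : p∈var(K), λ(p)={0,1}}. -/
import Mathlib


namespace Occ

/-- Propositional formulas over variables indexed by `ℕ`,
built from variables using negation and conjunction. -/
inductive Form : Type where
  | var : ℕ → Form
  | neg : Form → Form
  | conj : Form → Form → Form
deriving DecidableEq

/-- Boolean evaluation of a formula under an interpretation `w`. -/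
def eval (w : ℕ → Bool) : Form → Bool
  | .var p => w p
  | .neg φ => !(eval w φ)
  | .conj φ ψ => eval w φ && eval w ψ

/-- The variables occurring in a formula. -/
def vars : Form → Finset ℕ
  | .var p => {p}
  | .neg φ => vars φ
  | .conj φ ψ => vars φ ∪ vars ψ

/-- A step in a path addressing a subformula occurrence. -/
inductive Step : Type where
  | neg | left | right
deriving DecidableEq

/-- `occAt φ l pol = some (p, pol')` iff the path `l` addresses an occurrence of the
variable `p` in `φ`, and this occurrence has polarity `pol'` (`true` = positive)
when the ambient polarity of `φ` is `pol`. -/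
def occAt : Form → List Step → Bool → Option (ℕ × Bool)
  | .var p, [], pol => some (p, pol)
  | .neg φ, .neg :: l, pol => occAt φ l (!pol)
  | .conj φ _, .left :: l, pol => occAt φ l pol
  | .conj _ ψ, .right :: l, pol => occAt ψ l pol
  | _, _, _ => none

/-- A variable occurrence in a base: a formula together with a path into it. -/
abbrev Occurrence : Type := Form × List Step

/-- A propositional base: a finite set of formulas. -/
abbrev PB : Type := Finset Form

/-- `o` is a variable occurrence in the base `K`. -/
def IsOcc (K : PB) (o : Occurrence) : Prop :=
  o.1 ∈ K ∧ ∃ p pol, occAt o.1 o.2 true = some (p, pol)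

/-- `o` is an occurrence of the variable `p` in `K`, of polarity `pol`. -/
def IsOccOf (K : PB) (o : Occurrence) (p : ℕ) (pol : Bool) : Prop :=
  o.1 ∈ K ∧ occAt o.1 o.2 true = some (p, pol)

/-- `o` is an occurrence of the variable `p` in `K`. -/
def IsOccVar (K : PB) (o : Occurrence) (p : ℕ) : Prop :=
  ∃ pol, IsOccOf K o p pol

/-- `o` is a positive variable occurrence in `K`. -/
def IsPosOcc (K : PB) (o : Occurrence) : Prop := ∃ p, IsOccOf K o p true

/-- `o` is a negative variable occurrence in `K`. -/
def IsNegOcc (K : PB) (o : Occurrence) : Prop := ∃ p, IsOccOf K o p false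

/-- `o` and `o'` are occurrences of the same variable. -/
def sameVar (o o' : Occurrence) : Prop :=
  ∃ p pol pol', occAt o.1 o.2 true = some (p, pol) ∧ occAt o'.1 o'.2 true = some (p, pol')

/-- The variables occurring in a base. -/
def varsPB (K : PB) : Finset ℕ := K.sup vars

/-- `w` is a (Boolean) model of the base `K` (i.e. of the conjunction of its formulas). -/
def modelsPB (w : ℕ → Bool) (K : PB) : Prop := ∀ φ ∈ K, eval w φ = true

/-- A base is consistent iff the conjunction of its formulas has a model. -/
def ConsistentPB (K : PB) : Prop := ∃ w, modelsPB w K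

/-- Classical entailment from a base. -/
def Entails (K : PB) (φ : Form) : Prop := ∀ w, modelsPB w K → eval w φ = true

/-- Rename every variable occurrence of a formula, the new variable of the
occurrence at path `l` being `f l`. -/
def renameBy : (List Step → ℕ) → Form → Form
  | f, .var _ => .var (f [])
  | f, .neg φ => .neg (renameBy (fun l => f (.neg :: l)) φ)
  | f, .conj φ ψ =>
      .conj (renameBy (fun l => f (.left :: l)) φ) (renameBy (fun l => f (.right :: l)) ψ)

/-- The formula `φ` (viewed as a member of a base) with each occurrence `o`
replaced by the variable `R o`. -/
def renameForm (R : Occurrence → ℕ) (φ : Form) : Form :=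
  renameBy (fun l => R (φ, l)) φ

/-- A C-renaming of `K`: it assigns a pairwise distinct fresh variable to each
occurrence of `K`. -/
structure IsCRenaming (K : PB) (R : Occurrence → ℕ) : Prop where
  fresh : ∀ o, IsOcc K o → R o ∉ varsPB K
  inj : ∀ o o', IsOcc K o → IsOcc K o' → R o = R o' → o = o'

/-- Binary relations on occurrences, viewed as sets of ordered pairs. -/
abbrev Rel : Type := Set (Occurrence × Occurrence)

/-- `r` is an equivalence relation on `Occ(K)`. -/
structure IsEquivOn (K : PB) (r : Rel) : Prop where
  dom : ∀ q ∈ r, IsOcc K q.1 ∧ IsOcc K q.2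
  refl : ∀ o, IsOcc K o → (o, o) ∈ r
  symm : ∀ q ∈ r, (q.2, q.1) ∈ r
  trans : ∀ a b c : Occurrence, (a, b) ∈ r → (b, c) ∈ r → (a, c) ∈ r

/-- Compliance: related occurrences are occurrences of the same variable. -/
def Compliant (r : Rel) : Prop := ∀ q ∈ r, sameVar q.1 q.2

/-- Consistency of the formula `⋀R(K) ∧ ⋀_{(o,o')∈r} (R(o) ↔ R(o'))`. -/
def RelConsistent (K : PB) (R : Occurrence → ℕ) (r : Rel) : Prop :=
  ∃ w : ℕ → Bool, (∀ φ ∈ K, eval w (renameForm R φ) = true) ∧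
    ∀ q ∈ r, w (R q.1) = w (R q.2)

/-- Minimal Inconsistency Relation of `K` (w.r.t. the C-renaming `R`). -/
def IsMIR (K : PB) (R : Occurrence → ℕ) (r : Rel) : Prop :=
  IsEquivOn K r ∧ Compliant r ∧ ¬ RelConsistent K R r ∧
    ∀ r', IsEquivOn K r' → Compliant r' → ¬ RelConsistent K R r' → ¬ r' ⊂ r

/-- Maximal Consistency Relation of `K` (w.r.t. the C-renaming `R`). -/
def IsMCR (K : PB) (R : Occurrence → ℕ) (r : Rel) : Prop :=
  IsEquivOn K r ∧ Compliant r ∧ RelConsistent K R r ∧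
    ∀ r', IsEquivOn K r' → Compliant r' → RelConsistent K R r' → ¬ r ⊂ r'

/-- The relation `∼_c^K`: relating occurrences of `K` of the same variable. -/
def sameVarRel (K : PB) : Rel :=
  {q | IsOcc K q.1 ∧ IsOcc K q.2 ∧ sameVar q.1 q.2}

/-- `PN(r)`: related pairs consisting of a positive and a negative occurrence. -/
def PN (K : PB) (r : Rel) : Rel :=
  {q | q ∈ r ∧ IsPosOcc K q.1 ∧ IsNegOcc K q.2}

/-- A BMCR: an MCR satisfying Maximality-2. -/
def IsBMCR (K : PB) (R : Occurrence → ℕ) (r : Rel) : Prop :=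
  IsMCR K R r ∧
    ∀ r', IsEquivOn K r' → Compliant r' → RelConsistent K R r' → ¬ PN K r ⊂ PN K r'

/-- `H` is a hitting set of the collection `S`. -/
def IsHittingSet {α : Type} (S : Set (Set α)) (H : Set α) : Prop :=
  ∀ s ∈ S, (s ∩ H).Nonempty

/-- `H` is a minimal hitting set of the collection `S`. -/
def IsMinHittingSet {α : Type} (S : Set (Set α)) (H : Set α) : Prop :=
  IsHittingSet S H ∧ ∀ H', H' ⊂ H → ¬ IsHittingSet S H'

/-- `r` is `H`-maximal (for an equivalence relation `r ⊆ ∼_c^K`). -/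
def IsHMaximal (K : PB) (H r : Rel) : Prop :=
  r ∩ H = ∅ ∧
    ∀ r', IsEquivOn K r' → r' ⊆ sameVarRel K → r ⊂ r' → (r' ∩ H).Nonempty

/-- `r` is `H`-minimal (for an equivalence relation `r ⊆ ∼_c^K`). -/
def IsHMinimal (K : PB) (H r : Rel) : Prop :=
  H ⊆ r ∧ ∀ r', IsEquivOn K r' → r' ⊂ r → ¬ H ⊆ r'

/-- The set of all MIRs of `K`. -/
def MIRs (K : PB) (R : Occurrence → ℕ) : Set Rel := {r | IsMIR K R r}

/-- The set of all C-MCRs of `K`: relations `θ ⊆ ∼_c^K` with `∼_c^K ∖ θ` an MCR. -/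
def CMCRs (K : PB) (R : Occurrence → ℕ) : Set Rel :=
  {θ | θ ⊆ sameVarRel K ∧ IsMCR K R (sameVarRel K \ θ)}

/-- `ρ` is a `∼`-renaming for the equivalence relation `r` on `Occ(K)`:
it assigns a distinct variable to each equivalence class (so it is constant on
classes and distinguishes distinct classes), and any class containing all the
occurrences of a variable `p` is mapped to `p` itself. -/
def IsClassRenaming (K : PB) (r : Rel) (ρ : Occurrence → ℕ) : Prop :=
  (∀ o o', IsOcc K o → IsOcc K o' → (ρ o = ρ o' ↔ (o, o') ∈ r)) ∧
    (∀ o p, IsOccVar K o p → (∀ o', IsOccVar K o' p → (o, o') ∈ r) → ρ o = p)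

/-- `σ` encodes a tuple `(q₁,…,q_m) ∈ P(ρ_∼, S)` where `S = (p₁,…,p_m)`
enumerates `var(K) ∩ var(φ)`: it maps each shared variable `p` to a member of
`⌈ρ⌉(p)` and is the identity elsewhere. -/
def IsTupleChoice (K : PB) (φ : Form) (ρ : Occurrence → ℕ) (σ : ℕ → ℕ) : Prop :=
  (∀ p, p ∈ varsPB K → p ∈ vars φ → ∃ o, IsOccVar K o p ∧ σ p = ρ o) ∧
    (∀ p, ¬ (p ∈ varsPB K ∧ p ∈ vars φ) → σ p = p)

/-- Simultaneous substitution of variables by variables. -/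
def substV (σ : ℕ → ℕ) : Form → Form
  | .var p => .var (σ p)
  | .neg φ => .neg (substV σ φ)
  | .conj φ ψ => .conj (substV σ φ) (substV σ ψ)

/-- `ρ_∼(K) ⊢ ψ`. -/
def rhoEntails (K : PB) (ρ : Occurrence → ℕ) (ψ : Form) : Prop :=
  ∀ w : ℕ → Bool, (∀ φ ∈ K, eval w (renameForm ρ φ) = true) → eval w ψ = true

/-- The inference relation `K ⊩₁ φ`. -/
def Inf1 (K : PB) (R : Occurrence → ℕ) (φ : Form) : Prop :=
  ∀ r ρ, IsMCR K R r → IsClassRenaming K r ρ →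
    ∃ σ, IsTupleChoice K φ ρ σ ∧ rhoEntails K ρ (substV σ φ)

/-- The inference relation `K ⊩₂ φ`. -/
def Inf2 (K : PB) (R : Occurrence → ℕ) (φ : Form) : Prop :=
  ∀ r ρ, IsMCR K R r → IsClassRenaming K r ρ →
    ∀ σ, IsTupleChoice K φ ρ σ → rhoEntails K ρ (substV σ φ)

/-- The inference relation `K ⊩₁^B φ`. -/
def Inf1B (K : PB) (R : Occurrence → ℕ) (φ : Form) : Prop :=
  ∀ r ρ, IsBMCR K R r → IsClassRenaming K r ρ →
    ∃ σ, IsTupleChoice K φ ρ σ ∧ rhoEntails K ρ (substV σ φ)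

/-- The inference relation `K ⊩₂^B φ`. -/
def Inf2B (K : PB) (R : Occurrence → ℕ) (φ : Form) : Prop :=
  ∀ r ρ, IsBMCR K R r → IsClassRenaming K r ρ →
    ∀ σ, IsTupleChoice K φ ρ σ → rhoEntails K ρ (substV σ φ)

/-- `μ` is an o-model of `K`: any interpretation `w` with `w (R o) = μ o` for all
occurrences `o` of `K` is a model of `⋀R(K)`. -/
def OModel (K : PB) (R : Occurrence → ℕ) (μ : Occurrence → Bool) : Prop :=
  ∀ w : ℕ → Bool, (∀ o, IsOcc K o → w (R o) = μ o) →
    ∀ φ ∈ K, eval w (renameForm R φ) = true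

/-- `diff_a(μ)`: pairs of occurrences of the same variable on which `μ` differs. -/
def diffA (K : PB) (μ : Occurrence → Bool) : Rel :=
  {q | IsOcc K q.1 ∧ IsOcc K q.2 ∧ sameVar q.1 q.2 ∧ μ q.1 ≠ μ q.2}

/-- `μ` is an a-minimal o-model of `K`. -/
def AMinOModel (K : PB) (R : Occurrence → ℕ) (μ : Occurrence → Bool) : Prop :=
  OModel K R μ ∧ ∀ μ', OModel K R μ' → ¬ diffA K μ' ⊂ diffA K μ

/-- A Boolean interpretation `w` is compatible with an o-interpretation `μ`. -/
def Compatible (K : PB) (μ : Occurrence → Bool) (w : ℕ → Bool) : Prop :=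
  ∀ p ∈ varsPB K, ∃ o, IsOccVar K o p ∧ w p = μ o

/-- The inference relation `K ⊩_{a1} φ`. -/
def InfA1 (K : PB) (R : Occurrence → ℕ) (φ : Form) : Prop :=
  ∀ μ, AMinOModel K R μ → ∃ w, Compatible K μ w ∧ eval w φ = true

/-- The inference relation `K ⊩_{a2} φ`. -/
def InfA2 (K : PB) (R : Occurrence → ℕ) (φ : Form) : Prop :=
  ∀ μ, AMinOModel K R μ → ∀ w, Compatible K μ w → eval w φ = true

/-- LP_m evaluation: an LP_m interpretation assigns a (nonempty) set of truth
values to each variable; it extends to formulas pointwise. -/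
def lpEval (lam : ℕ → Set Bool) : Form → Set Bool
  | .var p => lam p
  | .neg φ => (fun v => !v) '' lpEval lam φ
  | .conj φ ψ => Set.image2 (· && ·) (lpEval lam φ) (lpEval lam ψ)

/-- `lam` is an LP_m interpretation: each variable gets a nonempty set of values. -/
def IsLPInterp (lam : ℕ → Set Bool) : Prop := ∀ p, (lam p).Nonempty

/-- `lam` is an LP_m model of `⋀K`. -/
def LPModelPB (lam : ℕ → Set Bool) (K : PB) : Prop := ∀ φ ∈ K, true ∈ lpEval lam φ

/-- `λ! = {p : λ(p) = {0,1}}`. -/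
def lpBang (lam : ℕ → Set Bool) : Set ℕ := {p | lam p = Set.univ}

/-- `lam` is a minimal LP_m model of `⋀K`. -/
def MinLPModelPB (K : PB) (lam : ℕ → Set Bool) : Prop :=
  IsLPInterp lam ∧ LPModelPB lam K ∧
    ∀ lam', IsLPInterp lam' → LPModelPB lam' K → ¬ lpBang lam' ⊂ lpBang lam

/-- `K ⊢_{LPm} φ`. -/
def LPmEntails (K : PB) (φ : Form) : Prop :=
  ∀ lam, MinLPModelPB K lam → true ∈ lpEval lam φ

/-- Replace the subformula occurrence of `φ` addressed by the path `l` by `ψ`. -/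
def replaceAt : Form → List Step → Form → Form
  | _, [], ψ => ψ
  | .neg φ, .neg :: l, ψ => .neg (replaceAt φ l ψ)
  | .conj φ χ, .left :: l, ψ => .conj (replaceAt φ l ψ) χ
  | .conj φ χ, .right :: l, ψ => .conj φ (replaceAt χ l ψ)
  | φ, _, _ => φ

/-- The equivalence relation `∼_λ` induced on `Occ(K)` by an LP_m interpretation:
its classes are `Occ(p,K)` for `|λ(p)| = 1` and `PosOcc(p,K)`, `NegOcc(p,K)` for
`λ(p) = {0,1}`. -/
def lamRel (K : PB) (lam : ℕ → Set Bool) : Rel :=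
  {q | ∃ p pol pol', IsOccOf K q.1 p pol ∧ IsOccOf K q.2 p pol' ∧
    (lam p = Set.univ → pol = pol')}

open scoped Classical in
/-- The o-interpretation `μ_λ^K` associated with an LP_m interpretation `λ`. -/
noncomputable def muOf (lam : ℕ → Set Bool) (o : Occurrence) : Bool :=
  match occAt o.1 o.2 true with
  | some (p, pol) =>
      if lam p = ({false} : Set Bool) then false
      else if lam p = ({true} : Set Bool) then true
      else pol
  | none => false


open scoped Classical in
/-- The value `μ_λ` gives to an occurrence of `p` with polarity `pol`. -/
noncomputable def muValue (lam : ℕ → Set Bool) (p : ℕ) (pol : Bool) : Bool :=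
  if lam p = ({false} : Set Bool) then false
  else if lam p = ({true} : Set Bool) then true
  else pol

lemma bool_set_cases {S : Set Bool} (hS : S.Nonempty) :
    S = {false} ∨ S = {true} ∨ S = Set.univ := by
  by_cases ht : true ∈ S <;> by_cases hf : false ∈ S
  · right; right; ext b; cases b <;> simp [ht, hf]
  · right; left; ext b; cases b <;> simp [ht, hf]
  · left; ext b; cases b <;> simp [ht, hf]
  · exact absurd hS (by rintro ⟨b, hb⟩; cases b <;> [exact hf hb; exact ht hb])

lemma occAt_vars : ∀ (φ : Form) (l : List Step) (pol : Bool) (p : ℕ) (pol' : Bool),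
    occAt φ l pol = some (p, pol') → p ∈ vars φ := by
  intro φ
  induction φ with
  | var q =>
    intro l pol p pol' hl
    cases l with
    | nil => simp [occAt] at hl; simp [vars, hl.1]
    | cons s l => cases s <;> simp [occAt] at hl
  | neg ψ ih =>
    intro l pol p pol' hl
    cases l with
    | nil => simp [occAt] at hl
    | cons s l =>
      cases s <;> simp only [occAt, vars] at hl ⊢
      · exact ih _ _ _ _ hl
      · exact absurd hl (by simp)
      · exact absurd hl (by simp)
  | conj ψ χ ih1 ih2 =>
    intro l pol p pol' hl
    cases l with
    | nil => simp [occAt] at hl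
    | cons s l =>
      cases s <;> simp only [occAt, vars, Finset.mem_union] at hl ⊢
      · exact absurd hl (by simp)
      · exact Or.inl (ih1 _ _ _ _ hl)
      · exact Or.inr (ih2 _ _ _ _ hl)

lemma vars_occAt : ∀ (φ : Form) (p : ℕ), p ∈ vars φ → ∀ pol,
    ∃ l pol', occAt φ l pol = some (p, pol') := by
  intro φ
  induction φ with
  | var q =>
    intro p hp pol
    simp [vars] at hp
    exact ⟨[], pol, by simp [occAt, hp]⟩
  | neg ψ ih =>
    intro p hp pol
    obtain ⟨l, pol', hl⟩ := ih p hp (!pol)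
    exact ⟨.neg :: l, pol', hl⟩
  | conj ψ χ ih1 ih2 =>
    intro p hp pol
    simp [vars] at hp
    rcases hp with hp | hp
    · obtain ⟨l, pol', hl⟩ := ih1 p hp pol
      exact ⟨.left :: l, pol', hl⟩
    · obtain ⟨l, pol', hl⟩ := ih2 p hp pol
      exact ⟨.right :: l, pol', hl⟩

/-- Soundness: if `pol ∈ λ(φ)` and `w` gives each renamed occurrence its
`μ_λ` value, then the renamed formula evaluates to `pol` under `w`. -/
lemma eval_renameBy_muValue (lam : ℕ → Set Bool) (w : ℕ → Bool) :
    ∀ (φ : Form) (pol : Bool) (f : List Step → ℕ),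
    (∀ l p pol', occAt φ l pol = some (p, pol') → w (f l) = muValue lam p pol') →
    pol ∈ lpEval lam φ → eval w (renameBy f φ) = pol := by
  intro φ
  induction φ with
  | var q =>
    intro pol f hf hm
    have hv := hf [] q pol (by simp [occAt])
    simp only [lpEval] at hm
    simp only [renameBy, eval, hv, muValue]
    rcases bool_set_cases ⟨pol, hm⟩ with hc | hc | hc
    · rw [hc] at hm; simp at hm; simp [hc, hm]
    · rw [hc] at hm; simp at hm; simp [hc, hm]
    · have h1 : lam q ≠ ({false} : Set Bool) := by
        rw [hc]; intro hcon
        have : (true : Bool) ∈ (Set.univ : Set Bool) := Set.mem_univ _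
        rw [hcon] at this; simp at this
      have h2 : lam q ≠ ({true} : Set Bool) := by
        rw [hc]; intro hcon
        have : (false : Bool) ∈ (Set.univ : Set Bool) := Set.mem_univ _
        rw [hcon] at this; simp at this
      simp [h1, h2]
  | neg ψ ih =>
    intro pol f hf hm
    simp only [lpEval, Set.mem_image] at hm
    obtain ⟨v, hv, hveq⟩ := hm
    have hv' : v = !pol := by cases pol <;> cases v <;> simp_all
    subst hv'
    have := ih (!pol) (fun l => f (.neg :: l)) (fun l p pol' hl => hf (.neg :: l) p pol' hl) hv
    simp [renameBy, eval, this]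
  | conj ψ χ ih1 ih2 =>
    intro pol f hf hm
    simp only [lpEval, Set.mem_image2] at hm
    obtain ⟨a, ha, b, hb, hab⟩ := hm
    have h1 := fun (hx : pol ∈ lpEval lam ψ) => ih1 pol (fun l => f (.left :: l))
      (fun l p pol' hl => hf (.left :: l) p pol' hl) hx
    have h2 := fun (hx : pol ∈ lpEval lam χ) => ih2 pol (fun l => f (.right :: l))
      (fun l p pol' hl => hf (.right :: l) p pol' hl) hx
    cases pol with
    | true =>
      have hab' := Bool.and_eq_true_iff.mp hab
      have ha' : a = true := hab'.1
      have hb' : b = true := hab'.2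
      subst ha'; subst hb'
      simp only [renameBy, eval, h1 ha, h2 hb, Bool.and_self]
    | false =>
      rcases Bool.and_eq_false_iff.mp hab with ha' | hb'
      · subst ha'
        simp only [renameBy, eval, h1 ha, Bool.false_and]
      · subst hb'
        simp only [renameBy, eval, h2 hb, Bool.and_false]

/-- Completeness: the value of a renamed formula belongs to the LP value
of the formula. -/
lemma eval_renameBy_mem (lam : ℕ → Set Bool) (w : ℕ → Bool) :
    ∀ (φ : Form) (pol : Bool) (f : List Step → ℕ),
    (∀ l p pol', occAt φ l pol = some (p, pol') → w (f l) ∈ lam p) →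
    eval w (renameBy f φ) ∈ lpEval lam φ := by
  intro φ
  induction φ with
  | var q =>
    intro pol f hf
    exact hf [] q pol (by simp [occAt])
  | neg ψ ih =>
    intro pol f hf
    have := ih (!pol) (fun l => f (.neg :: l)) (fun l p pol' hl => hf (.neg :: l) p pol' hl)
    exact ⟨_, this, rfl⟩
  | conj ψ χ ih1 ih2 =>
    intro pol f hf
    have h1 := ih1 pol (fun l => f (.left :: l)) (fun l p pol' hl => hf (.left :: l) p pol' hl)
    have h2 := ih2 pol (fun l => f (.right :: l)) (fun l p pol' hl => hf (.right :: l) p pol' hl)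
    exact Set.mem_image2_of_mem h1 h2

lemma mem_varsPB {K : PB} {φ : Form} {p : ℕ} (hφ : φ ∈ K) (hp : p ∈ vars φ) :
    p ∈ varsPB K :=
  Finset.mem_of_subset (Finset.le_sup hφ) hp

lemma mem_lamRel {K : PB} {lam : ℕ → Set Bool} {o o' : Occurrence} {p : ℕ}
    {pol pol' : Bool} (h1 : IsOccOf K o p pol) (h2 : IsOccOf K o' p pol')
    (himp : lam p = Set.univ → pol = pol') : (o, o') ∈ lamRel K lam :=
  ⟨p, pol, pol', h1, h2, himp⟩

lemma muOf_eq (lam : ℕ → Set Bool) {o : Occurrence} {p : ℕ} {pol : Bool}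
    (ho : occAt o.1 o.2 true = some (p, pol)) :
    muOf lam o = muValue lam p pol := by
  simp [muOf, muValue, ho]

lemma lamRel_equiv (K : PB) (lam : ℕ → Set Bool) : IsEquivOn K (lamRel K lam) := by
  constructor
  · rintro ⟨a, b⟩ ⟨p, pol, pol', h1, h2, _⟩
    exact ⟨⟨h1.1, p, pol, h1.2⟩, ⟨h2.1, p, pol', h2.2⟩⟩
  · rintro o ⟨hmem, p, pol, hocc⟩
    exact ⟨p, pol, pol, ⟨hmem, hocc⟩, ⟨hmem, hocc⟩, fun _ => rfl⟩
  · rintro ⟨a, b⟩ ⟨p, pol, pol', h1, h2, himp⟩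
    exact ⟨p, pol', pol, h2, h1, fun hu => (himp hu).symm⟩
  · rintro a b c ⟨p, pol, pol', h1, h2, himp⟩ ⟨q, polq, polq', h3, h4, himp'⟩
    have hpq : p = q ∧ pol' = polq := by
      have := h2.2.symm.trans h3.2
      exact ⟨(Prod.mk.injEq _ _ _ _ ▸ Option.some.inj this).1,
        (Prod.mk.injEq _ _ _ _ ▸ Option.some.inj this).2⟩
    obtain ⟨hp, hpol⟩ := hpq
    subst hp; subst hpol
    exact ⟨p, pol, polq', h1, h4, fun hu => (himp hu).trans (himp' hu)⟩

lemma lamRel_compliant (K : PB) (lam : ℕ → Set Bool) : Compliant (lamRel K lam) := by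
  rintro ⟨a, b⟩ ⟨p, pol, pol', h1, h2, _⟩
  exact ⟨p, pol, pol', h1.2, h2.2⟩

end Occ

open Occ

/-- Proposition 11: if `λ` is a minimal LP_m model of `⋀K`, then
`∼_λ` is an MCR of `K`. -/
theorem minimal_LPm_model_gives_MCR (K : Occ.PB)
    (R : Occ.Occurrence → ℕ) (hR : Occ.IsCRenaming K R)
    (lam : ℕ → Set Bool) (h : Occ.MinLPModelPB K lam) :
    Occ.IsMCR K R (Occ.lamRel K lam) := by
  classical
  obtain ⟨hinterp, hmodel, hmin⟩ := h
  refine ⟨lamRel_equiv K lam, lamRel_compliant K lam, ?_, ?_⟩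
  · -- Consistency
    set w : ℕ → Bool := fun n =>
      if hn : ∃ o, IsOcc K o ∧ R o = n then muOf lam hn.choose else false with hw
    have hwR : ∀ o, IsOcc K o → w (R o) = muOf lam o := by
      intro o ho
      have hex : ∃ o', IsOcc K o' ∧ R o' = R o := ⟨o, ho, rfl⟩
      have hch := hex.choose_spec
      have : hex.choose = o := hR.inj _ _ hch.1 ho hch.2
      simp only [hw, dif_pos hex, this]
    refine ⟨w, ?_, ?_⟩
    · intro φ hφ
      refine eval_renameBy_muValue lam w φ true (fun l => R (φ, l)) ?_ (hmodel φ hφ)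
      intro l p pol' hl
      have ho : IsOcc K (φ, l) := ⟨hφ, p, pol', hl⟩
      rw [hwR _ ho, muOf_eq lam hl]
    · rintro ⟨a, b⟩ ⟨p, pol, pol', h1, h2, himp⟩
      have ha : IsOcc K a := ⟨h1.1, p, pol, h1.2⟩
      have hb : IsOcc K b := ⟨h2.1, p, pol', h2.2⟩
      rw [hwR _ ha, hwR _ hb, muOf_eq lam h1.2, muOf_eq lam h2.2]
      rcases bool_set_cases (hinterp p) with hc | hc | hc
      · simp [muValue, hc]
      · simp [muValue, hc]
      · rw [himp hc]
  · -- Maximality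
    rintro r' hEq hComp ⟨w', hw1, hw2⟩ hss
    obtain ⟨hsub, hne⟩ := hss
    obtain ⟨⟨a, b⟩, habr', habn⟩ := Set.not_subset.mp hne
    obtain ⟨ha, hb⟩ := hEq.dom _ habr'
    obtain ⟨p, pol, pol', hocca, hoccb⟩ := hComp _ habr'
    have h1 : IsOccOf K a p pol := ⟨ha.1, hocca⟩
    have h2 : IsOccOf K b p pol' := ⟨hb.1, hoccb⟩
    have hbad : lam p = Set.univ ∧ pol ≠ pol' := by
      by_contra hcon
      push_neg at hcon
      apply habn
      refine ⟨p, pol, pol', h1, h2, fun hu => ?_⟩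
      by_contra hnp
      exact hnp (hcon hu)
    -- all occurrences of `p` get the same w'-value
    -- key: positive and negative occurrences of p are linked through (a,b)
    have hlink : w' (R a) = w' (R b) := hw2 _ habr'
    have hsamepol : ∀ o o' q b0, IsOccOf K o q b0 → IsOccOf K o' q b0 →
        w' (R o) = w' (R o') := by
      intro o o' q b0 ho ho'
      exact hw2 _ (hsub (mem_lamRel ho ho' (fun _ => rfl)))
    have hsame_nonuniv : ∀ o o' q b0 b1, lam q ≠ Set.univ →
        IsOccOf K o q b0 → IsOccOf K o' q b1 → w' (R o) = w' (R o') := by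
      intro o o' q b0 b1 hq ho ho'
      exact hw2 _ (hsub (mem_lamRel ho ho' (fun hu => absurd hu hq)))
    have hpall : ∀ o b0, IsOccOf K o p b0 → w' (R o) = w' (R a) := by
      intro o b0 ho
      by_cases hb0 : b0 = pol
      · subst hb0; exact hsamepol o a p b0 ho h1
      · have : b0 = pol' := by
          cases b0 <;> cases pol <;> cases pol' <;> simp_all [hbad.2]
        subst this
        exact (hsamepol o b p b0 ho h2).trans hlink.symm
    -- define the new LP interpretation
    set lam' : ℕ → Set Bool := fun x =>
      if x ∈ varsPB K then {v | ∃ o, IsOccVar K o x ∧ w' (R o) = v} else lam x with hlam'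
    have hlam'x : ∀ x, lam' x =
        if x ∈ varsPB K then {v | ∃ o, IsOccVar K o x ∧ w' (R o) = v} else lam x :=
      fun x => rfl
    have hlam'_mem : ∀ x ∈ varsPB K, ∀ o, IsOccVar K o x → w' (R o) ∈ lam' x := by
      intro x hx o ho
      rw [hlam'x x, if_pos hx]
      exact ⟨o, ho, rfl⟩
    have hinterp' : IsLPInterp lam' := by
      intro x
      by_cases hx : x ∈ varsPB K
      · obtain ⟨φ, hφ, hxφ⟩ := by
          simpa [varsPB, Finset.mem_sup] using hx
        obtain ⟨l, polx, hl⟩ := vars_occAt φ x hxφ true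
        exact ⟨w' (R (φ, l)), hlam'_mem x hx (φ, l) ⟨polx, hφ, hl⟩⟩
      · rw [hlam'x x, if_neg hx]; exact hinterp x
    have hmodel' : LPModelPB lam' K := by
      intro φ hφ
      have := eval_renameBy_mem lam' w' φ true (fun l => R (φ, l)) ?_
      · have h0 : renameBy (fun l => R (φ, l)) φ = renameForm R φ := rfl
        rw [h0, hw1 φ hφ] at this
        exact this
      · intro l q polq hl
        have hq : q ∈ varsPB K := mem_varsPB hφ (occAt_vars φ l true q polq hl)
        exact hlam'_mem q hq (φ, l) ⟨polq, hφ, hl⟩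
    apply hmin lam' hinterp' hmodel'
    constructor
    · -- lpBang lam' ⊆ lpBang lam
      intro x hx
      simp only [lpBang, Set.mem_setOf_eq] at hx ⊢
      by_cases hxK : x ∈ varsPB K
      · rw [hlam'x x, if_pos hxK] at hx
        by_contra hxu
        have ht : true ∈ ({v | ∃ o, IsOccVar K o x ∧ w' (R o) = v} : Set Bool) := by
          rw [hx]; exact Set.mem_univ _
        have hf : false ∈ ({v | ∃ o, IsOccVar K o x ∧ w' (R o) = v} : Set Bool) := by
          rw [hx]; exact Set.mem_univ _
        obtain ⟨o1, ⟨b1, ho1⟩, he1⟩ := ht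
        obtain ⟨o2, ⟨b2, ho2⟩, he2⟩ := hf
        have := hsame_nonuniv o1 o2 x b1 b2 hxu ho1 ho2
        rw [he1, he2] at this
        exact Bool.true_eq_false.mp this
      · rw [hlam'x x, if_neg hxK] at hx; exact hx
    · -- strictness: p ∈ lpBang lam \ lpBang lam'
      intro hsub'
      have hpv : p ∈ varsPB K := mem_varsPB h1.1 (occAt_vars _ _ _ _ _ h1.2)
      have hpb : p ∈ lpBang lam' := hsub' hbad.1
      simp only [lpBang, Set.mem_setOf_eq] at hpb
      rw [hlam'x p, if_pos hpv] at hpb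
      -- but lam' p ⊆ {w' (R a)}
      have : ({v | ∃ o, IsOccVar K o p ∧ w' (R o) = v} : Set Bool) ⊆ {w' (R a)} := by
        rintro v ⟨o, ⟨b0, ho⟩, hv⟩
        simp only [Set.mem_singleton_iff, ← hv]
        exact hpall o b0 ho
      rw [hpb] at this
      have h3 := this (Set.mem_univ true)
      have h4 := this (Set.mem_univ false)
      simp only [Set.mem_singleton_iff] at h3 h4
      rw [← h3] at h4
      exact Bool.false_ne_true h4
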